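/- If G is a k-extendable graph on ν ≥ 2k+2 vertices with k ≥ 1, then G is (k−1)-extendable. -/

import Mathlib

open SimpleGraph

/-- `G` has a matching with exactly `k` edges. -/
def HasMatchingOfSize {V : Type*} (G : SimpleGraph V) (k : ℕ) : Prop :=
  ∃ M : G.Subgraph, M.IsMatching ∧ M.edgeSet.ncard = k

/-- `G` is `k`-extendable: connected, has a matching of size `k`, and every
matching of size `k` extends to a perfect matching. -/
def Extendable {V : Type*} (G : SimpleGraph V) (k : ℕ) : Prop :=
  G.Connected ∧ HasMatchingOfSize G k ∧
    ∀ M : G.Subgraph, M.IsMatching → M.edgeSet.ncard = k →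
      ∃ M' : G.Subgraph, M ≤ M' ∧ M'.IsPerfectMatching

/-- `G` is `n`-factor-critical: deleting any `n` vertices leaves a graph with
a perfect matching. -/
def FactorCritical {V : Type*} [Fintype V] (G : SimpleGraph V) (n : ℕ) : Prop :=
  ∀ S : Finset V, S.card = n →
    ∃ M : (G.induce ((↑S : Set V)ᶜ)).Subgraph, M.IsPerfectMatching

/-- `G` is `k½`-extendable: for every vertex `v`, `G - v` has a matching of
size `k`, and every matching of size `k` in `G - v` extends to a perfect
matching of `G - v`. -/
def HalfExtendable {V : Type*} (G : SimpleGraph V) (k : ℕ) : Prop :=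
  ∀ v : V,
    HasMatchingOfSize (G.induce ({v}ᶜ : Set V)) k ∧
    ∀ M : (G.induce ({v}ᶜ : Set V)).Subgraph, M.IsMatching → M.edgeSet.ncard = k →
      ∃ M' : (G.induce ({v}ᶜ : Set V)).Subgraph, M ≤ M' ∧ M'.IsPerfectMatching

lemma matching_edge_eq {V : Type*} {G : SimpleGraph V} {M : G.Subgraph}
    (h : M.IsMatching) {e f : Sym2 V} (he : e ∈ M.edgeSet) (hf : f ∈ M.edgeSet)
    {v : V} (hve : v ∈ e) (hvf : v ∈ f) : e = f := by
  have key : ∀ {x y z : V}, M.Adj x y → M.Adj x z → y = z := fun h1 h2 =>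
    (h (M.edge_vert h1)).unique h1 h2
  induction e using Sym2.ind with | _ a b =>
  induction f using Sym2.ind with | _ c d =>
  rw [SimpleGraph.Subgraph.mem_edgeSet] at he hf
  rw [Sym2.mem_iff] at hve hvf
  obtain rfl | rfl := hve <;> obtain h1 | h1 := hvf
  · subst h1; rw [key he hf]
  · subst h1; rw [key he hf.symm, Sym2.eq_swap]
  · subst h1; rw [key he.symm hf, Sym2.eq_swap]
  · subst h1; rw [key he.symm hf.symm]

lemma exists_matching_of_edges {V : Type*} {G : SimpleGraph V} (s : Set (Sym2 V))
    (hs : s ⊆ G.edgeSet)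
    (hdisj : ∀ e ∈ s, ∀ f ∈ s, ∀ v : V, v ∈ e → v ∈ f → e = f) :
    ∃ M : G.Subgraph, M.IsMatching ∧ M.edgeSet = s := by
  refine ⟨⟨{v | ∃ e ∈ s, v ∈ e}, fun a b => s(a, b) ∈ s,
      fun h => (SimpleGraph.mem_edgeSet _).mp (hs h),
      fun h => ⟨_, h, Sym2.mem_mk_left _ _⟩,
      ⟨fun a b h => by show s(b, a) ∈ s; rwa [Sym2.eq_swap]⟩⟩, ?_, ?_⟩
  · rintro v ⟨e, he, hv⟩
    obtain ⟨w, rfl⟩ := Sym2.mem_iff_exists.mp hv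
    refine ⟨w, he, fun w' hw' => ?_⟩
    have := hdisj _ hw' _ he v (Sym2.mem_mk_left _ _) (Sym2.mem_mk_left _ _)
    exact Sym2.congr_right.mp this
  · ext e
    induction e using Sym2.ind with | _ a b =>
    rw [SimpleGraph.Subgraph.mem_edgeSet]

lemma matching_two_mul_ncard {V : Type*} [Fintype V] {G : SimpleGraph V}
    {M : G.Subgraph} (h : M.IsMatching) : 2 * M.edgeSet.ncard = M.verts.ncard := by
  classical
  have hVfin : M.verts.Finite := Set.toFinite _
  have hEfin : M.edgeSet.Finite := Set.toFinite _
  set Vs := hVfin.toFinset with hVs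
  set Es := hEfin.toFinset with hEs
  set f : V → Sym2 V := fun v => if hv : v ∈ M.verts then s(v, (h hv).choose) else s(v, v) with hf
  have hmap : ∀ v ∈ Vs, f v ∈ Es := by
    intro v hv
    rw [Set.Finite.mem_toFinset] at hv ⊢
    rw [hf]
    simp only [hv, dif_pos]
    exact (h hv).choose_spec.1
  have hcard := Finset.card_eq_sum_card_fiberwise hmap
  have hfiber : ∀ e ∈ Es, (Vs.filter (fun v => f v = e)).card = 2 := by
    intro e he
    rw [Set.Finite.mem_toFinset] at he
    induction e using Sym2.ind with | _ a b =>
    rw [SimpleGraph.Subgraph.mem_edgeSet] at he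
    have hab : a ≠ b := (M.adj_sub he).ne
    have hstep : ∀ x y : V, M.Adj x y → f x = s(x, y) := by
      intro x y hxy
      have hx : x ∈ M.verts := M.edge_vert hxy
      rw [hf]
      simp only [hx, dif_pos]
      rw [← (h hx).choose_spec.2 y hxy]
    have : Vs.filter (fun v => f v = s(a, b)) = {a, b} := by
      ext v
      simp only [Finset.mem_filter, hVs, Set.Finite.mem_toFinset, Finset.mem_insert,
        Finset.mem_singleton]
      constructor
      · rintro ⟨hv, hfv⟩
        have hvm : v ∈ f v := by
          rw [hf]
          by_cases hv' : v ∈ M.verts <;> simp [hv']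
        rw [hfv, Sym2.mem_iff] at hvm
        exact hvm
      · rintro (rfl | rfl)
        · exact ⟨M.edge_vert he, hstep _ _ he⟩
        · refine ⟨M.edge_vert he.symm, ?_⟩
          rw [hstep _ _ he.symm, Sym2.eq_swap]
      
    rw [this, Finset.card_insert_of_notMem (by simpa using hab), Finset.card_singleton]
  rw [Finset.sum_congr rfl hfiber, Finset.sum_const, smul_eq_mul, mul_comm] at hcard
  rw [Set.ncard_eq_toFinset_card _ hEfin, Set.ncard_eq_toFinset_card _ hVfin, hcard]

lemma pm_edge_count {V : Type*} [Fintype V] {G : SimpleGraph V} {F : G.Subgraph}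
    (hF : F.IsPerfectMatching) : 2 * F.edgeSet.ncard = Fintype.card V := by
  rw [matching_two_mul_ncard hF.1, hF.2.verts_eq_univ, Set.ncard_univ, Nat.card_eq_fintype_card]

lemma extend_to_pm {V : Type*} [Fintype V] (G : SimpleGraph V) (k : ℕ) (hk : 1 ≤ k)
    (hν : 2 * k + 2 ≤ Fintype.card V) (hext : Extendable G k)
    (M : G.Subgraph) (hM : M.IsMatching) (hMc : M.edgeSet.ncard = k - 1) :
    ∃ F : G.Subgraph, M ≤ F ∧ F.IsPerfectMatching := by
  classical
  obtain ⟨M₀, hM₀, hM₀c⟩ := hext.2.1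
  obtain ⟨F₀, _, hF₀⟩ := hext.2.2 M₀ hM₀ hM₀c
  set S : Set ℕ := {n | ∃ F : G.Subgraph, F.IsPerfectMatching ∧ (M.edgeSet ∩ F.edgeSet).ncard = n}
    with hS
  have hSne : S.Nonempty := ⟨_, F₀, hF₀, rfl⟩
  have hSbdd : BddAbove S := by
    refine ⟨k, fun n hn => ?_⟩
    obtain ⟨F, hF, hFn⟩ := hn
    rw [← hFn]
    have : (M.edgeSet ∩ F.edgeSet).ncard ≤ M.edgeSet.ncard :=
      Set.ncard_le_ncard Set.inter_subset_left (Set.toFinite _)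
    omega
  obtain ⟨F, hF, hFeq⟩ := Nat.sSup_mem hSne hSbdd
  have hsubM : M.edgeSet ⊆ F.edgeSet := by
    by_contra hcon
    obtain ⟨e, he, heF⟩ := Set.not_subset.mp hcon
    induction e using Sym2.ind with | _ x y =>
    have hAdj : M.Adj x y := SimpleGraph.Subgraph.mem_edgeSet.mp he
    have hnF : ¬ F.Adj x y := fun h => heF (SimpleGraph.Subgraph.mem_edgeSet.mpr h)
    obtain ⟨a, ha, hau⟩ := hF.1 (hF.2 x)
    obtain ⟨b, hb, hbu⟩ := hF.1 (hF.2 y)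
    have hxy : x ≠ y := (M.adj_sub hAdj).ne
    have hay : a ≠ y := fun h => hnF (h ▸ ha)
    have hbx : b ≠ x := fun h => hnF ((h ▸ hb).symm)
    have hxa : s(x, a) ∈ F.edgeSet := SimpleGraph.Subgraph.mem_edgeSet.mpr ha
    have hyb : s(y, b) ∈ F.edgeSet := SimpleGraph.Subgraph.mem_edgeSet.mpr hb
    set T : Set (Sym2 V) := F.edgeSet \ {s(x, a), s(y, b)} with hT
    have hTavoid : ∀ f ∈ T, x ∉ f ∧ y ∉ f := by
      rintro f ⟨hfF, hfn⟩
      simp only [Set.mem_insert_iff, Set.mem_singleton_iff, not_or] at hfn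
      constructor
      · intro hxf
        exact hfn.1 (matching_edge_eq hF.1 hfF hxa hxf (Sym2.mem_mk_left _ _))
      · intro hyf
        exact hfn.2 (matching_edge_eq hF.1 hfF hyb hyf (Sym2.mem_mk_left _ _))
    have hIsub : M.edgeSet ∩ F.edgeSet ⊆ T := by
      rintro f ⟨hfM, hfF⟩
      refine ⟨hfF, ?_⟩
      simp only [Set.mem_insert_iff, Set.mem_singleton_iff, not_or]
      constructor
      · rintro rfl
        exact heF (matching_edge_eq hM hfM he (Sym2.mem_mk_left _ _) (Sym2.mem_mk_left _ _) ▸ hfF)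
      · rintro rfl
        exact heF (matching_edge_eq hM hfM he (Sym2.mem_mk_left _ _) (Sym2.mem_mk_right _ _) ▸ hfF)
    have hInotE : s(x, y) ∉ M.edgeSet ∩ F.edgeSet := fun h => heF h.2
    have hIcard : (M.edgeSet ∩ F.edgeSet).ncard + 1 ≤ k - 1 := by
      have h1 : M.edgeSet ∩ F.edgeSet ⊆ M.edgeSet \ {s(x, y)} := by
        rintro f ⟨hfM, hfF⟩
        exact ⟨hfM, fun hfe => heF (by rwa [← Set.mem_singleton_iff.mp hfe])⟩
      have h2 : (M.edgeSet \ {s(x, y)}).ncard = M.edgeSet.ncard - 1 :=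
        Set.ncard_diff_singleton_of_mem he
      have h3 := Set.ncard_le_ncard h1 (Set.toFinite _)
      have h4 : 0 < M.edgeSet.ncard := (Set.ncard_pos (Set.toFinite _)).mpr ⟨_, he⟩
      omega
    have hFcard : k + 1 ≤ F.edgeSet.ncard := by
      have := pm_edge_count hF
      omega
    have hTcard : k - 1 ≤ T.ncard := by
      have h1 : F.edgeSet ⊆ T ∪ {s(x, a), s(y, b)} := by
        intro f hf
        by_cases hmem : f ∈ ({s(x, a), s(y, b)} : Set (Sym2 V))
        · exact Or.inr hmem
        · exact Or.inl ⟨hf, hmem⟩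
      have h2 := Set.ncard_le_ncard h1 (Set.toFinite _)
      have h3 := Set.ncard_union_le T ({s(x, a), s(y, b)} : Set (Sym2 V))
      have h4 : ({s(x, a), s(y, b)} : Set (Sym2 V)).ncard ≤ 2 :=
        (Set.ncard_insert_le _ _).trans (by simp)
      omega
    obtain ⟨E', hIE', hE'T, hE'c⟩ :=
      Set.exists_subsuperset_card_eq hIsub (by omega) hTcard
    set s' : Set (Sym2 V) := insert s(x, y) E' with hs'
    have heE' : s(x, y) ∉ E' := fun h => heF (hE'T h).1
    have hs'G : s' ⊆ G.edgeSet := by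
      rw [hs', Set.insert_subset_iff]
      exact ⟨M.edgeSet_subset he, fun f hf => F.edgeSet_subset (hE'T hf).1⟩
    have hs'disj : ∀ e₁ ∈ s', ∀ e₂ ∈ s', ∀ v : V, v ∈ e₁ → v ∈ e₂ → e₁ = e₂ := by
      rintro e₁ (rfl | h1) e₂ (rfl | h2) v hv1 hv2
      · rfl
      · exfalso
        rcases Sym2.mem_iff.mp hv1 with rfl | rfl
        · exact (hTavoid _ (hE'T h2)).1 hv2
        · exact (hTavoid _ (hE'T h2)).2 hv2
      · exfalso
        rcases Sym2.mem_iff.mp hv2 with rfl | rfl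
        · exact (hTavoid _ (hE'T h1)).1 hv1
        · exact (hTavoid _ (hE'T h1)).2 hv1
      · exact matching_edge_eq hF.1 (hE'T h1).1 (hE'T h2).1 hv1 hv2
    have hs'c : s'.ncard = k := by
      rw [hs', Set.ncard_insert_of_notMem heE' (Set.toFinite _), hE'c]
      omega
    obtain ⟨N, hN, hNe⟩ := exists_matching_of_edges s' hs'G hs'disj
    obtain ⟨F', hNF', hF'⟩ := hext.2.2 N hN (by rw [hNe]; exact hs'c)
    have hs'F' : s' ⊆ F'.edgeSet := hNe ▸ SimpleGraph.Subgraph.edgeSet_mono hNF'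
    have hbig : insert s(x, y) (M.edgeSet ∩ F.edgeSet) ⊆ M.edgeSet ∩ F'.edgeSet := by
      rw [Set.insert_subset_iff]
      refine ⟨⟨he, hs'F' (Set.mem_insert _ _)⟩, fun f hf =>
        ⟨hf.1, hs'F' (Set.mem_insert_of_mem _ (hIE' hf))⟩⟩
    have hlt : (M.edgeSet ∩ F.edgeSet).ncard + 1 ≤ (M.edgeSet ∩ F'.edgeSet).ncard := by
      have h1 := Set.ncard_le_ncard hbig (Set.toFinite _)
      rwa [Set.ncard_insert_of_notMem hInotE (Set.toFinite _)] at h1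
    have hle : (M.edgeSet ∩ F'.edgeSet).ncard ≤ sSup S :=
      le_csSup hSbdd ⟨F', hF', rfl⟩
    omega
  refine ⟨F, ⟨fun v _ => hF.2 v, fun v w hab => SimpleGraph.Subgraph.mem_edgeSet.mp (hsubM (SimpleGraph.Subgraph.mem_edgeSet.mpr hab))⟩, hF⟩


/-- a `k`-extendable graph on `ν ≥ 2k+2` vertices with `k ≥ 1` is `(k-1)`-extendable. -/
theorem stmt2 {V : Type*} [Fintype V] (G : SimpleGraph V) (k : ℕ)
    (hk : 1 ≤ k) (hν : 2 * k + 2 ≤ Fintype.card V)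
    (hext : Extendable G k) : Extendable G (k - 1) := by
  obtain ⟨hconn, ⟨M₀, hM₀, hM₀c⟩, hex⟩ := hext
  refine ⟨hconn, ?_, fun M hM hMc => extend_to_pm G k hk hν ⟨hconn, ⟨M₀, hM₀, hM₀c⟩, hex⟩ M hM hMc⟩
  obtain ⟨s, hs, hsc⟩ := Set.exists_subset_card_eq (show k - 1 ≤ M₀.edgeSet.ncard by omega)
  obtain ⟨N, hN, hNe⟩ := exists_matching_of_edges s (hs.trans M₀.edgeSet_subset)
    (fun e he f hf v hv hvf => matching_edge_eq hM₀ (hs he) (hs hf) hv hvf)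
  exact ⟨N, hN, by rw [hNe]; exact hsc⟩
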